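/- Let T and T' be strings over Σ ∪ {#} with # ∉ Σ and |Σ| ≥ 3, such that d_H(T,T') = 1, T[i] ≠ T'[i] = # for some position i, the number of occurrences of a periodic string P of length m in T exceeds that in T' by some y > 0, and # occurs exactly once in T'[i−m+1..i+m−1]. Then T'[i] can be substituted by a letter from Σ yielding a string T'' in which the number of occurrences of P is at most that in T'. -/

import Mathlib

open Classical

/-- `p` is a period of the string (list) `P`. -/
def IsPeriodOf {α : Type*} (P : List α) (p : ℕ) : Prop :=
  0 < p ∧ ∀ i, i + p < P.length → P[i]? = P[i + p]?

/-- The smallest period of `P`. -/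
noncomputable def minPeriod {α : Type*} (P : List α) : ℕ := sInf {p | IsPeriodOf P p}

/-- `P` is periodic if its smallest period is at most `|P|/2`. -/
def ListPeriodic {α : Type*} (P : List α) : Prop := 2 * minPeriod P ≤ P.length

/-- `P` occurs in `S` starting at position `i`. -/
def OccursAt {α : Type*} (P S : List α) (i : ℕ) : Prop :=
  i + P.length ≤ S.length ∧ (S.drop i).take P.length = P

/-- The set of starting positions of occurrences of `P` in `S`. -/
noncomputable def occ {α : Type*} (P S : List α) : Finset ℕ :=
  (Finset.range (S.length + 1)).filter (fun i => OccursAt P S i)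

/-- Hamming distance between two (equal-length) strings. -/
noncomputable def hamming {α : Type*} (S T : List α) : ℕ :=
  ((List.range S.length).filter (fun i => S[i]? ≠ T[i]?)).length

/-- `P` is `(τ,k)`-resilient in `S`. -/
def Resilient {α : Type*} (P S : List α) (τ k : ℕ) : Prop :=
  ∀ S' : List α, S'.length = S.length → hamming S S' ≤ k → τ ≤ (occ P S').card

/-- The fragment `S[x..y]` (inclusive). -/
def frag {α : Type*} (S : List α) (x y : ℕ) : List α := (S.drop x).take (y - x + 1)

/-- The fragment `S[x..y]` is a run of `S`. -/
def IsRun {α : Type*} (S : List α) (x y : ℕ) : Prop :=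
  x ≤ y ∧ y < S.length ∧ 2 * minPeriod (frag S x y) ≤ y - x + 1 ∧
  (0 < x → ¬ IsPeriodOf (frag S (x - 1) y) (minPeriod (frag S x y))) ∧
  (y + 1 < S.length → ¬ IsPeriodOf (frag S x (y + 1)) (minPeriod (frag S x y)))

lemma occ_get {α : Type*} {P S : List α} {j : ℕ} (h : OccursAt P S j) {t : ℕ}
    (ht : t < P.length) : S[j + t]? = P[t]? := by
  obtain ⟨hl, he⟩ := h
  conv_rhs => rw [← he]
  rw [List.getElem?_take_of_lt ht, List.getElem?_drop]

theorem stmt9 {α : Type*} [Fintype α] [DecidableEq α] (hcard : 3 ≤ Fintype.card α)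
    (T T' P : List (Option α)) (m i y : ℕ)
    (hlen : T'.length = T.length)
    (hd : hamming T T' = 1)
    (hi : i < T.length) (hne : T[i]? ≠ T'[i]?) (hsharp : T'[i]? = some none)
    (hper : ListPeriodic P) (hm : P.length = m)
    (hy : 0 < y) (hdrop : (occ P T).card = (occ P T').card + y)
    (hone : (frag T' (i - m + 1) (i + m - 1)).count none = 1) :
    ∃ c : α, (occ P (T'.set i (some c))).card ≤ (occ P T').card := by
  -- minimal period facts
  have hNne : {p | IsPeriodOf P p}.Nonempty := by
    refine ⟨P.length + 1, Nat.succ_pos _, fun t ht => ?_⟩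
    omega
  have hmem : IsPeriodOf P (minPeriod P) := Nat.sInf_mem hNne
  obtain ⟨hppos, hpp⟩ := hmem
  set p := minPeriod P with hp
  have h2p : 2 * p ≤ m := hm ▸ hper
  -- choose c avoiding T'[i-p]? and T'[i+p]?
  have hBc : ∃ c : α, (some (some c) : Option (Option α)) ≠ T'[i - p]? ∧
      (some (some c) : Option (Option α)) ≠ T'[i + p]? := by
    by_contra hc
    push_neg at hc
    have hsub : (Finset.univ : Finset α) ⊆
        (T'[i - p]?).join.toFinset ∪ (T'[i + p]?).join.toFinset := by
      intro a _
      rcases eq_or_ne (some (some a) : Option (Option α)) (T'[i - p]?) with h | h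
      · exact Finset.mem_union_left _ (by rw [← h]; simp)
      · exact Finset.mem_union_right _ (by rw [← hc a h]; simp)
    have hcd := Finset.card_le_card hsub
    have h1 : ((T'[i - p]?).join.toFinset : Finset α).card ≤ 1 := by
      cases h : (T'[i - p]?).join <;> simp
    have h2 : ((T'[i + p]?).join.toFinset : Finset α).card ≤ 1 := by
      cases h : (T'[i + p]?).join <;> simp
    have hcu := Finset.card_union_le ((T'[i - p]?).join.toFinset)
      ((T'[i + p]?).join.toFinset)
    simp only [Finset.card_univ] at hcd
    omega
  obtain ⟨c, hc1, hc2⟩ := hBc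
  refine ⟨c, Finset.card_le_card ?_⟩
  intro j hj
  simp only [occ, Finset.mem_filter, Finset.mem_range, List.length_set] at hj ⊢
  obtain ⟨hjr, hocc⟩ := hj
  have hilen : i < T'.length := hlen ▸ hi
  have hocclen : j + P.length ≤ T'.length := by
    have := hocc.1; simpa using this
  refine ⟨hjr, hocclen, ?_⟩
  -- show the occurrence cannot cover position i
  have hcover : ¬ (j ≤ i ∧ i < j + m) := by
    rintro ⟨hji, hij⟩
    set k := i - j with hk
    have hkm : k < m := by omega
    have hPk : P[k]? = some (some c) := by
      have := occ_get hocc (t := k) (by omega : k < P.length)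
      rw [show j + k = i by omega, List.getElem?_set_self hilen] at this
      exact this.symm
    by_cases hcase : k + p < m
    · -- use position k + p
      have hper1 : P[k]? = P[k + p]? := hpp k (by omega)
      have := occ_get hocc (t := k + p) (by omega : k + p < P.length)
      rw [show j + (k + p) = i + p by omega,
        List.getElem?_set_ne (by omega : i ≠ i + p)] at this
      rw [hPk] at hper1
      rw [← hper1] at this
      exact hc2 this.symm
    · -- use position k - p; note p ≤ k
      have hpk : p ≤ k := by omega
      have hper1 : P[k - p]? = P[k - p + p]? := hpp (k - p) (by omega)
      rw [show k - p + p = k by omega, hPk] at hper1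
      have := occ_get hocc (t := k - p) (by omega : k - p < P.length)
      rw [show j + (k - p) = i - p by omega,
        List.getElem?_set_ne (by omega : i ≠ i - p)] at this
      rw [hper1] at this
      exact hc1 this.symm
  -- hence the fragment is untouched
  have hfrag : (T'.drop j).take P.length = ((T'.set i (some c)).drop j).take P.length := by
    apply List.ext_getElem?
    intro n
    by_cases hn : n < P.length
    · rw [List.getElem?_take_of_lt hn, List.getElem?_take_of_lt hn, List.getElem?_drop, List.getElem?_drop,
        List.getElem?_set_ne (by omega : i ≠ j + n)]
    · rw [List.getElem?_eq_none, List.getElem?_eq_none]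
      · simp; omega
      · simp; omega
  rw [hfrag]
  exact hocc.2
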